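/- Let Q be a profinite group and let Π₁, ..., Πₙ be open normal subgroups of Q whose product Π₁ × ... × Πₙ embeds as an open subgroup of Q, with each Πᵢ having open Frattini subgroup. Then Q has open Frattini subgroup, i.e., the intersection of all maximal proper open subgroups of Q is open. -/

import Mathlib

open scoped Pointwise


/-- The (topological) Frattini subgroup of a topological group: the intersection of
all maximal proper closed subgroups (equal to the whole group if there are none). -/
def closedFrattini (Q : Type*) [Group Q] [TopologicalSpace Q] : Subgroup Q :=
  sInf {M : Subgroup Q | IsClosed (M : Set Q) ∧ M ≠ ⊤ ∧
    ∀ N : Subgroup Q, IsClosed (N : Set Q) → M < N → N = ⊤}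

section Aux

variable {G : Type*} [Group G] [TopologicalSpace G] [IsTopologicalGroup G]
  [CompactSpace G] [T2Space G]

/-- In a compact totally disconnected topological group, every neighbourhood of `1`
contains an open normal subgroup. -/
lemma exists_openNormalSubgroup_subset [TotallyDisconnectedSpace G]
    {s : Set G} (hs : s ∈ nhds 1) : ∃ H : OpenNormalSubgroup G, (H : Set G) ⊆ s := by
  obtain ⟨t, hts, htopen, hmem⟩ := mem_nhds_iff.mp hs
  obtain ⟨C, hC, hmemC, hCt⟩ := compact_exists_isClopen_in_isOpen htopen hmem
  obtain ⟨H, hH⟩ := IsTopologicalGroup.exist_openNormalSubgroup_sub_clopen_nhds_of_one hC hmemC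
  exact ⟨H, hH.trans (hCt.trans hts)⟩

/-- Every proper closed subgroup of a compact totally disconnected group is contained in
a proper open subgroup. -/
lemma exists_open_proper_above [TotallyDisconnectedSpace G]
    (D : Subgroup G) (hD : IsClosed (D : Set G)) (hne : D ≠ ⊤) :
    ∃ V₀ : Subgroup G, IsOpen (V₀ : Set G) ∧ V₀ ≠ ⊤ ∧ D ≤ V₀ := by
  obtain ⟨x, hx⟩ : ∃ x, x ∉ D := by
    by_contra h
    push_neg at h
    exact hne ((Subgroup.eq_top_iff' D).mpr h)
  have hsub : (D : Set G) ⊆ {x}ᶜ := by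
    intro d hd hdx
    exact hx (by rwa [Set.mem_singleton_iff.mp hdx] at hd)
  obtain ⟨Vs, hVs, hmul⟩ :=
    compact_open_separated_mul_right hD.isCompact isOpen_compl_singleton hsub
  obtain ⟨W, hW⟩ := exists_openNormalSubgroup_subset hVs
  refine ⟨D ⊔ W.toSubgroup, Subgroup.isOpen_mono le_sup_right W.isOpen, ?_, le_sup_left⟩
  intro htop
  have hxmem : x ∈ ((D ⊔ W.toSubgroup : Subgroup G) : Set G) := by
    rw [htop]; trivial
  rw [Subgroup.mul_normal] at hxmem
  have : x ∈ (D : Set G) * Vs := Set.mul_subset_mul_left hW hxmem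
  exact hmul this rfl

/-- Every proper closed subgroup of a compact totally disconnected group is contained in
a maximal proper closed subgroup. -/
lemma exists_maximal_closed_above [TotallyDisconnectedSpace G]
    (D : Subgroup G) (hD : IsClosed (D : Set G)) (hne : D ≠ ⊤) :
    ∃ M : Subgroup G,
      M ∈ {M : Subgroup G | IsClosed (M : Set G) ∧ M ≠ ⊤ ∧
        ∀ N : Subgroup G, IsClosed (N : Set G) → M < N → N = ⊤} ∧ D ≤ M := by
  obtain ⟨V₀, hV₀open, hV₀ne, hDV₀⟩ := exists_open_proper_above D hD hne
  have hfinq : Finite (G ⧸ V₀) := Subgroup.quotient_finite_of_isOpen V₀ hV₀open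
  set s : Set (Subgroup G) := {K | V₀ ≤ K ∧ K ≠ ⊤} with hs
  have hmono : ∀ K K' : Subgroup G, V₀ ≤ K' →
      (QuotientGroup.mk '' (K : Set G) : Set (G ⧸ V₀)) ⊆ QuotientGroup.mk '' (K' : Set G) →
      K ≤ K' := by
    intro K K' hK' himg g hg
    obtain ⟨k, hk, hke⟩ := himg ⟨g, hg, rfl⟩
    have : k⁻¹ * g ∈ V₀ := (QuotientGroup.eq).mp hke
    have : g = k * (k⁻¹ * g) := by group
    rw [this]
    exact mul_mem hk (hK' ‹k⁻¹ * g ∈ V₀›)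
  have hbigfin : {K : Subgroup G | V₀ ≤ K}.Finite := by
    apply Set.Finite.of_finite_image
      (f := fun K : Subgroup G => (QuotientGroup.mk '' (K : Set G) : Set (G ⧸ V₀)))
    · exact Set.toFinite _
    · intro K₁ h₁ K₂ h₂ heq
      exact le_antisymm (hmono K₁ K₂ h₂ heq.le) (hmono K₂ K₁ h₁ heq.ge)
  have hsfin : s.Finite := hbigfin.subset fun K hK => hK.1
  obtain ⟨M, hMs, hMmax⟩ :=
    Set.Finite.exists_maximalFor id s hsfin ⟨V₀, le_rfl, hV₀ne⟩
  refine ⟨M, ⟨?_, hMs.2, ?_⟩, hDV₀.trans hMs.1⟩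
  · exact Subgroup.isClosed_of_isOpen M (Subgroup.isOpen_mono hMs.1 hV₀open)
  · intro N hNc hMN
    by_contra hNne
    have hNs : N ∈ s := ⟨hMs.1.trans hMN.le, hNne⟩
    exact hMN.ne (le_antisymm hMN.le (hMmax hNs hMN.le))

/-- Non-generator property of the closed Frattini subgroup: if `D` is a closed subgroup
and `D * V = G` for some `V` inside the Frattini subgroup, then `D = G`. -/
lemma eq_top_of_mul_frattini [TotallyDisconnectedSpace G]
    (D : Subgroup G) (hD : IsClosed (D : Set G)) (V : Subgroup G)
    (hV : V ≤ closedFrattini G) (hDV : (D : Set G) * (V : Set G) = Set.univ) :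
    D = ⊤ := by
  by_contra hne
  obtain ⟨M, hMmem, hDM⟩ := exists_maximal_closed_above D hD hne
  have hfr : closedFrattini G ≤ M := sInf_le hMmem
  apply hMmem.2.1
  rw [Subgroup.eq_top_iff']
  intro g
  have : g ∈ (D : Set G) * (V : Set G) := by rw [hDV]; trivial
  obtain ⟨d, hd, v, hv, rfl⟩ := this
  exact mul_mem (hDM hd) (hfr (hV hv))

end Aux

section Pi

variable {ι : Type*} [Fintype ι] (P : ι → Type*)
  [∀ i, Group (P i)] [∀ i, TopologicalSpace (P i)] [∀ i, IsTopologicalGroup (P i)]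
  [∀ i, CompactSpace (P i)] [∀ i, TotallyDisconnectedSpace (P i)] [∀ i, T2Space (P i)]

/-- A product of closed normal subgroups of the Frattini subgroups of the factors is
contained in the closed Frattini subgroup of the product. -/
lemma pi_le_closedFrattini (W : ∀ i, Subgroup (P i)) (hWn : ∀ i, (W i).Normal)
    (hWc : ∀ i, IsClosed ((W i : Subgroup (P i)) : Set (P i)))
    (hWle : ∀ i, W i ≤ closedFrattini (P i)) :
    Subgroup.pi Set.univ W ≤ closedFrattini ((i : ι) → P i) := by
  classical
  have key : ∀ (M : Subgroup ((i : ι) → P i)), IsClosed (M : Set ((i : ι) → P i)) → M ≠ ⊤ →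
      (∀ N : Subgroup ((i : ι) → P i), IsClosed (N : Set ((i : ι) → P i)) → M < N → N = ⊤) →
      ∀ i, Subgroup.map (MonoidHom.mulSingle P i) (W i) ≤ M := by
    intro M hMc hMne hMmax i
    set Ni := Subgroup.map (MonoidHom.mulSingle P i) (W i) with hNi
    have hNic : IsClosed (Ni : Set ((i : ι) → P i)) := by
      have hcpt : IsCompact ((MonoidHom.mulSingle P i) '' (W i : Set (P i))) :=
        ((hWc i).isCompact).image (continuous_mulSingle i)
      simpa [hNi, Subgroup.coe_map] using hcpt.isClosed
    have hNin : Ni.Normal := by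
      constructor
      rintro n hn g
      obtain ⟨b, hb, rfl⟩ := hn
      have hconj : g * (MonoidHom.mulSingle P i b) * g⁻¹ =
          MonoidHom.mulSingle P i (g i * b * (g i)⁻¹) := by
        funext j
        by_cases h : j = i
        · subst h; simp [MonoidHom.mulSingle_apply]
        · simp [MonoidHom.mulSingle_apply, Pi.mulSingle_eq_of_ne h]
      rw [hconj]
      exact ⟨g i * b * (g i)⁻¹, (hWn i).conj_mem b hb (g i), rfl⟩
    by_cases hle : Ni ≤ M
    · exact hle
    have hJc : IsClosed ((M ⊔ Ni : Subgroup ((i : ι) → P i)) : Set ((i : ι) → P i)) := by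
      rw [Subgroup.mul_normal]
      exact (hMc.isCompact.mul hNic.isCompact).isClosed
    have hJtop : M ⊔ Ni = ⊤ := hMmax _ hJc (left_lt_sup.mpr hle)
    set D' := M.comap (MonoidHom.mulSingle P i) with hD'
    have hD'c : IsClosed ((D' : Subgroup (P i)) : Set (P i)) :=
      hMc.preimage (continuous_mulSingle i)
    have hD'mul : ((D' : Subgroup (P i)) : Set (P i)) * ((W i : Subgroup (P i)) : Set (P i)) =
        Set.univ := by
      apply Set.eq_univ_of_forall
      intro a
      have hmem : MonoidHom.mulSingle P i a ∈
          ((M ⊔ Ni : Subgroup ((i : ι) → P i)) : Set ((i : ι) → P i)) := by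
        rw [hJtop]; trivial
      rw [Subgroup.mul_normal] at hmem
      obtain ⟨m, hm, n, hn, hmn⟩ := hmem
      obtain ⟨b, hb, rfl⟩ := hn
      have hma : m = MonoidHom.mulSingle P i (a * b⁻¹) := by
        have : m = MonoidHom.mulSingle P i a * (MonoidHom.mulSingle P i b)⁻¹ := by
          rw [← hmn]; group
        rw [this, ← map_inv, ← map_mul]
      have hab : a * b⁻¹ ∈ D' := by
        show MonoidHom.mulSingle P i (a * b⁻¹) ∈ M
        rw [← hma]; exact hm
      exact ⟨a * b⁻¹, hab, b, hb, by group⟩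
    have hD'top : D' = ⊤ := eq_top_of_mul_frattini D' hD'c (W i) (hWle i) hD'mul
    rintro _ ⟨b, hb, rfl⟩
    have : b ∈ D' := by rw [hD'top]; trivial
    exact this
  intro f hf
  have hmem : ∀ M ∈ {M : Subgroup ((i : ι) → P i) |
      IsClosed (M : Set ((i : ι) → P i)) ∧ M ≠ ⊤ ∧
      ∀ N : Subgroup ((i : ι) → P i), IsClosed (N : Set ((i : ι) → P i)) → M < N → N = ⊤},
      f ∈ M := by
    rintro M ⟨hMc, hMne, hMmax⟩
    have hprod := Finset.noncommProd_mulSingle f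
    rw [← hprod]
    apply Subgroup.noncommProd_mem
    intro j _
    exact key M hMc hMne hMmax j ⟨f j, (Subgroup.mem_pi _).mp hf j trivial, rfl⟩
  exact Subgroup.mem_sInf.mpr hmem

end Pi

/-- If a profinite group `Q` has an open subgroup which is isomorphic, as a topological
group, to a finite product `Π₁ × ⋯ × Πₙ` of profinite groups each having open Frattini
subgroup, then the Frattini subgroup of `Q` is open. -/
theorem frattini_isOpen_of_open_product
    {Q : Type*} [Group Q] [TopologicalSpace Q] [IsTopologicalGroup Q]
    [CompactSpace Q] [TotallyDisconnectedSpace Q] [T2Space Q]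
    {ι : Type*} [Fintype ι] (P : ι → Type*)
    [∀ i, Group (P i)] [∀ i, TopologicalSpace (P i)] [∀ i, IsTopologicalGroup (P i)]
    [∀ i, CompactSpace (P i)] [∀ i, TotallyDisconnectedSpace (P i)] [∀ i, T2Space (P i)]
    (U : Subgroup Q) (hU : IsOpen (U : Set Q))
    (e : U ≃* ((i : ι) → P i)) (he : Continuous e) (he' : Continuous e.symm)
    (hfr : ∀ i, IsOpen ((closedFrattini (P i) : Subgroup (P i)) : Set (P i))) :
    IsOpen ((closedFrattini Q : Subgroup Q) : Set Q) := by
  classical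
  -- choose open normal subgroups inside each Frattini subgroup
  have hchoice : ∀ i, ∃ H : OpenNormalSubgroup (P i),
      (H : Set (P i)) ⊆ (closedFrattini (P i) : Set (P i)) :=
    fun i => exists_openNormalSubgroup_subset ((hfr i).mem_nhds (one_mem _))
  choose W hW using hchoice
  -- the product of these subgroups
  set V' : Subgroup ((i : ι) → P i) :=
    Subgroup.pi Set.univ (fun i => (W i).toSubgroup) with hV'def
  have hV'le : V' ≤ closedFrattini ((i : ι) → P i) := by
    apply pi_le_closedFrattini
    · exact fun i => (W i).isNormal'
    · exact fun i => Subgroup.isClosed_of_isOpen _ (W i).isOpen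
    · exact fun i => fun a ha => hW i ha
  have hV'open : IsOpen (V' : Set ((i : ι) → P i)) := by
    rw [hV'def, Subgroup.coe_pi]
    exact isOpen_set_pi Set.finite_univ (fun i _ => (W i).isOpen)
  -- pull back to an open subgroup of Q
  set V : Subgroup Q := Subgroup.map U.subtype (V'.comap e.toMonoidHom) with hVdef
  have hVcoe : (V : Set Q) = Subtype.val '' (⇑e ⁻¹' (V' : Set ((i : ι) → P i))) := by
    rw [hVdef, Subgroup.coe_map, Subgroup.coe_comap, Subgroup.coe_subtype]
    rfl
  have hVopen : IsOpen (V : Set Q) := by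
    rw [hVcoe]
    exact hU.isOpenMap_subtype_val _ (hV'open.preimage he)
  have hVU : V ≤ U := Subgroup.map_subtype_le _
  -- take an open normal subgroup of Q inside V
  obtain ⟨N, hN⟩ := exists_openNormalSubgroup_subset (hVopen.mem_nhds (one_mem _))
  have hNV : N.toSubgroup ≤ V := fun a ha => hN ha
  -- show that N is contained in every maximal proper closed subgroup
  have key : ∀ M ∈ {M : Subgroup Q | IsClosed (M : Set Q) ∧ M ≠ ⊤ ∧
      ∀ K : Subgroup Q, IsClosed (K : Set Q) → M < K → K = ⊤}, N.toSubgroup ≤ M := by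
    rintro M ⟨hMc, hMne, hMmax⟩
    by_cases hle : N.toSubgroup ≤ M
    · exact hle
    exfalso
    have hJc : IsClosed ((M ⊔ N.toSubgroup : Subgroup Q) : Set Q) := by
      rw [Subgroup.mul_normal]
      exact (hMc.isCompact.mul
        ((Subgroup.isClosed_of_isOpen _ N.isOpen).isCompact)).isClosed
    have hJtop : M ⊔ N.toSubgroup = ⊤ := hMmax _ hJc (left_lt_sup.mpr hle)
    -- transfer M ∩ U to the product
    set D : Subgroup ((i : ι) → P i) := (M.comap U.subtype).map e.toMonoidHom with hDdef
    have hDc : IsClosed (D : Set ((i : ι) → P i)) := by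
      have heq : (D : Set ((i : ι) → P i)) = ⇑e '' (Subtype.val ⁻¹' (M : Set Q)) := by
        rw [hDdef, Subgroup.coe_map, Subgroup.coe_comap, Subgroup.coe_subtype]
        rfl
      have himg : ⇑e '' (Subtype.val ⁻¹' (M : Set Q)) =
          ⇑e.symm ⁻¹' (Subtype.val ⁻¹' (M : Set Q)) := by
        ext x
        constructor
        · rintro ⟨y, hy, rfl⟩
          simpa [e.symm_apply_apply] using hy
        · intro hx
          exact ⟨e.symm x, hx, e.apply_symm_apply x⟩
      rw [heq, himg]
      exact (hMc.preimage continuous_subtype_val).preimage he'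
    have hDmul : (D : Set ((i : ι) → P i)) * (V' : Set ((i : ι) → P i)) = Set.univ := by
      apply Set.eq_univ_of_forall
      intro h
      set a : U := e.symm h with hadef
      have haQ : (a : Q) ∈ ((M ⊔ N.toSubgroup : Subgroup Q) : Set Q) := by
        rw [hJtop]; trivial
      rw [Subgroup.mul_normal] at haQ
      obtain ⟨m, hm, n, hn, hmn⟩ := haQ
      have hnV : n ∈ V := hNV hn
      obtain ⟨b, hbV', hbn⟩ := hnV
      -- hbV' : b ∈ V'.comap e.toMonoidHom, hbn : ↑b = n
      have hbn' : (b : Q) = n := hbn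
      have hmU : ((a * b⁻¹ : U) : Q) = m := by
        push_cast
        rw [hbn', ← hmn]
        group
      have hm' : a * b⁻¹ ∈ M.comap U.subtype := by
        rw [Subgroup.mem_comap]
        show ((a * b⁻¹ : U) : Q) ∈ M
        rw [hmU]
        exact hm
      refine ⟨e (a * b⁻¹), ⟨a * b⁻¹, hm', rfl⟩, e b, hbV', ?_⟩
      calc e (a * b⁻¹) * e b = e (a * b⁻¹ * b) := (map_mul e _ _).symm
        _ = e a := by rw [inv_mul_cancel_right]
        _ = h := by rw [hadef]; exact e.apply_symm_apply h
    have hDtop : D = ⊤ := eq_top_of_mul_frattini D hDc V' hV'le hDmul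
    have hUM : U ≤ M := by
      intro x hx
      have hmemD : e ⟨x, hx⟩ ∈ D := by rw [hDtop]; trivial
      obtain ⟨c, hc, hce⟩ := hmemD
      have hcx : c = ⟨x, hx⟩ := e.injective hce
      rw [hcx] at hc
      exact hc
    have htople : (⊤ : Subgroup Q) ≤ M := by
      rw [← hJtop]
      exact sup_le le_rfl ((hNV.trans hVU).trans hUM)
    exact hMne (top_le_iff.mp htople)
  exact Subgroup.isOpen_mono (le_sInf key) N.isOpen
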